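/- Let u : ℝ[x,y] → ℝ be a reflexive linear moment functional, let Λ = (λ_{ij}) be a real symmetric centrosymmetric positive semidefinite matrix of size (n+1)×(n+1), and let p₀, …, pₙ ∈ ℝ² be points, p_i = (x_i, y_i), such that x_i = y_{n−i} for all i = 0, …, n (equivalently, p_{n−i} is obtained from p_i by swapping its coordinates). Define the Uvarov bilinear form (f, g)_U = u(f·g) + Σ_{i=0}^{n} Σ_{j=0}^{n} λ_{ij} f(p_i) g(p_j) for f, g ∈ ℝ[x,y]. Then (x^k, y^l)_U = (x^l, y^k)_U for all k, l ≥ 0. -/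
import Mathlib


open Matrix MvPolynomial

/-- A real matrix `Λ` is centrosymmetric if `λᵢⱼ = λ_{n-i, n-j}` for all `i`, `j`. -/
def Centrosymmetric {m n : ℕ} (L : Matrix (Fin m) (Fin n) ℝ) : Prop :=
  ∀ i j, L i j = L i.rev j.rev

/-- Let `u` be a reflexive moment functional on `ℝ[x,y]`, `Λ` a symmetric
centrosymmetric positive semidefinite matrix, and `p₀, …, pₙ ∈ ℝ²` points
`pᵢ = (xᵢ, yᵢ)` with `xᵢ = y_{n-i}`.  Then the Uvarov bilinear form
`(f, g)_U = u(f g) + Σᵢⱼ λᵢⱼ f(pᵢ) g(pⱼ)` satisfies `(x^k, y^l)_U = (x^l, y^k)_U`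
for all `k, l ≥ 0`. -/
theorem uvarov_modification_reflexive (n : ℕ)
    (u : MvPolynomial (Fin 2) ℝ →ₗ[ℝ] ℝ)
    (hu : ∀ a b : ℕ, u (X 0 ^ a * X 1 ^ b) = u (X 0 ^ b * X 1 ^ a))
    (Λ : Matrix (Fin (n + 1)) (Fin (n + 1)) ℝ)
    (hΛsym : Λ.IsSymm) (hΛpsd : Λ.PosSemidef) (hΛc : Centrosymmetric Λ)
    (pt : Fin (n + 1) → Fin 2 → ℝ)
    (hpt : ∀ i : Fin (n + 1), pt i 0 = pt i.rev 1) :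
    ∀ k l : ℕ,
      u (X 0 ^ k * X 1 ^ l) +
          ∑ i, ∑ j, Λ i j * eval (pt i) (X 0 ^ k : MvPolynomial (Fin 2) ℝ) *
            eval (pt j) (X 1 ^ l : MvPolynomial (Fin 2) ℝ) =
        u (X 0 ^ l * X 1 ^ k) +
          ∑ i, ∑ j, Λ i j * eval (pt i) (X 0 ^ l : MvPolynomial (Fin 2) ℝ) *
            eval (pt j) (X 1 ^ k : MvPolynomial (Fin 2) ℝ) := by
  intro k l
  have hrev : ∀ i : Fin (n + 1), pt i.rev 0 = pt i 1 := by
    intro i; rw [hpt i.rev, Fin.rev_rev]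
  have hsym : ∀ i j, Λ j i = Λ i j := fun i j => by
    conv_lhs => rw [← hΛsym]
    rfl
  simp only [eval_pow, eval_X]
  rw [hu k l]
  congr 1
  calc ∑ i : Fin (n+1), ∑ j : Fin (n+1), Λ i j * pt i 0 ^ k * pt j 1 ^ l
      = ∑ i : Fin (n+1), ∑ j : Fin (n+1), Λ i.rev j.rev * pt i.rev 1 ^ k * pt j.rev 0 ^ l := by
        refine Finset.sum_congr rfl fun i _ => Finset.sum_congr rfl fun j _ => ?_
        rw [hpt i, ← hrev j, ← hΛc]
    _ = ∑ i : Fin (n+1), ∑ j : Fin (n+1), Λ i j * pt i 1 ^ k * pt j 0 ^ l := by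
        rw [← Equiv.sum_comp (Fin.revPerm) (fun i => ∑ j, Λ i j * pt i 1 ^ k * pt j 0 ^ l)]
        refine Finset.sum_congr rfl fun i _ => ?_
        exact Equiv.sum_comp (Fin.revPerm)
          (fun j => Λ (Fin.revPerm i) j * pt (Fin.revPerm i) 1 ^ k * pt j 0 ^ l)
    _ = ∑ i : Fin (n+1), ∑ j : Fin (n+1), Λ i j * pt i 0 ^ l * pt j 1 ^ k := by
        rw [Finset.sum_comm]
        refine Finset.sum_congr rfl fun i _ => Finset.sum_congr rfl fun j _ => ?_
        rw [hsym]; ring
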